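/- For every integer n ≥ 4 and every integer a with n−1 ≤ a ≤ C(n−2,2) + n − 1, there exists a connected 2*-dense graph on n vertices with exactly a edges. -/

import Mathlib

/-- A graph `G` is `k`-dense if every two adjacent vertices have at least `k - 2`
common neighbors. -/
def kDense {V : Type*} (G : SimpleGraph V) (k : ℕ) : Prop :=
  ∀ u v : V, G.Adj u v → k - 2 ≤ (G.neighborSet u ∩ G.neighborSet v).ncard

/-- A graph is `k*`-dense if it is `k`-dense but not `(k+1)`-dense. -/
def kStarDense {V : Type*} (G : SimpleGraph V) (k : ℕ) : Prop :=
  kDense G k ∧ ¬ kDense G (k + 1)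

/-- For n ≥ 4 and any a with n − 1 ≤ a ≤ C(n−2,2) + n − 1, there is a connected
2*-dense graph on n vertices with exactly a edges. -/
theorem realization_twoStarDense (n a : ℕ) (hn : 4 ≤ n)
    (ha₁ : n - 1 ≤ a) (ha₂ : a ≤ Nat.choose (n - 2) 2 + n - 1) :
    ∃ G : SimpleGraph (Fin n), G.Connected ∧ kStarDense G 2 ∧ G.edgeSet.ncard = a := by
  unfold kStarDense kDense
  classical
  obtain ⟨m, rfl⟩ := Nat.exists_eq_add_of_le' hn
  -- n = m + 4
  rw [show m + 4 - 2 = m + 2 from by omega] at ha₂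
  rw [show m + 4 - 1 = m + 3 from by omega] at ha₁
  have h01 : (0 : Fin (m + 4)) ≠ 1 := by
    simp [Fin.ext_iff, Fin.val_one']
  set B : Finset (Sym2 (Fin (m + 4))) :=
    ((⊤ : SimpleGraph {x : Fin (m + 4) // x ≠ 0}).edgeFinset).image (Sym2.map Subtype.val)
    with hBdef
  have hB_ne0 : ∀ e ∈ B, ∀ x ∈ e, x ≠ (0 : Fin (m + 4)) := by
    intro e he
    obtain ⟨e', _, rfl⟩ := Finset.mem_image.mp he
    induction e' with
    | _ p q =>
      intro x hx
      rw [Sym2.map_pair_eq, Sym2.mem_iff] at hx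
      rcases hx with rfl | rfl
      · exact p.prop
      · exact q.prop
  have hB_nondiag : ∀ e ∈ B, ¬ e.IsDiag := by
    intro e he
    obtain ⟨e', he', rfl⟩ := Finset.mem_image.mp he
    induction e' with
    | _ p q =>
      rw [SimpleGraph.mem_edgeFinset, SimpleGraph.mem_edgeSet] at he'
      rw [Sym2.map_pair_eq, Sym2.mk_isDiag_iff]
      exact fun h => he'.ne (Subtype.ext h)
  have hB_mem : ∀ x y : Fin (m + 4), x ≠ 0 → y ≠ 0 → x ≠ y → s(x, y) ∈ B := by
    intro x y hx hy hxy
    refine Finset.mem_image.mpr ⟨s(⟨x, hx⟩, ⟨y, hy⟩), ?_, by simp⟩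
    simp [SimpleGraph.mem_edgeFinset, Subtype.ext_iff, hxy]
  set A : Finset (Sym2 (Fin (m + 4))) := insert s(0, 1) B with hAdef
  have hA_nondiag : ∀ e ∈ A, ¬ e.IsDiag := by
    intro e he
    rcases Finset.mem_insert.mp he with rfl | he
    · rw [Sym2.mk_isDiag_iff]; exact h01
    · exact hB_nondiag e he
  have hBcard : B.card = Nat.choose (m + 3) 2 := by
    rw [Finset.card_image_of_injective _ (Sym2.map.injective Subtype.val_injective),
      SimpleGraph.card_edgeFinset_top_eq_card_choose_two]
    congr 1
    rw [Fintype.card_subtype_compl]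
    simp
  have hAcard : A.card = Nat.choose (m + 2) 2 + (m + 3) := by
    rw [Finset.card_insert_of_notMem, hBcard]
    · rw [Nat.choose_succ_succ (m + 2) 1]
      simp [Nat.add_comm, Nat.add_left_comm]
      ring
    · intro h
      exact hB_ne0 _ h 0 (by simp) rfl
  set T : Finset (Sym2 (Fin (m + 4))) :=
    (Finset.univ : Finset (Fin (m + 3))).image (fun k => s(k.castSucc, k.succ)) with hTdef
  have hTcard : T.card = m + 3 := by
    rw [Finset.card_image_of_injective, Finset.card_univ, Fintype.card_fin]
    intro x y h
    rw [Sym2.eq_iff] at h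
    rcases h with ⟨h1, _⟩ | ⟨h1, h2⟩
    · exact Fin.castSucc_injective _ h1
    · have e1 : (x : ℕ) = (y : ℕ) + 1 := by
        have := congrArg Fin.val h1; simpa using this
      have e2 : (x : ℕ) + 1 = (y : ℕ) := by
        have := congrArg Fin.val h2; simpa using this
      omega
  have hTA : T ⊆ A := by
    intro e he
    obtain ⟨k, _, rfl⟩ := Finset.mem_image.mp he
    by_cases hk : k = 0
    · subst hk
      simp only [Fin.castSucc_zero, Fin.succ_zero_eq_one]
      exact Finset.mem_insert_self _ _
    · refine Finset.mem_insert_of_mem (hB_mem _ _ ?_ ?_ ?_)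
      · exact fun h => hk (Fin.ext (by simpa using congrArg Fin.val h))
      · exact Fin.succ_ne_zero k
      · rw [Ne, Fin.ext_iff]; simp
  have hcardA_ge : a ≤ A.card := by rw [hAcard]; omega
  obtain ⟨S, hTS, hSA, hScard⟩ :=
    Finset.exists_subsuperset_card_eq hTA (by rw [hTcard]; omega) hcardA_ge
  set G := SimpleGraph.fromEdgeSet (↑S : Set (Sym2 (Fin (m + 4)))) with hGdef
  have hAdj : ∀ u v : Fin (m + 4), G.Adj u v ↔ s(u, v) ∈ S := by
    intro u v
    rw [hGdef, SimpleGraph.fromEdgeSet_adj]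
    constructor
    · rintro ⟨h, -⟩; exact h
    · intro h
      refine ⟨h, fun huv => ?_⟩
      exact hA_nondiag _ (hSA h) (by rw [Sym2.mk_isDiag_iff]; exact huv)
  have hPath : ∀ k : Fin (m + 3), G.Adj k.castSucc k.succ := by
    intro k
    rw [hAdj]
    exact hTS (Finset.mem_image.mpr ⟨k, Finset.mem_univ _, rfl⟩)
  have hReach : ∀ k : ℕ, ∀ hk : k < m + 4, G.Reachable 0 ⟨k, hk⟩ := by
    intro k
    induction k with
    | zero => intro hk; exact SimpleGraph.Reachable.refl _
    | succ k ih =>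
      intro hk
      have hk' : k < m + 4 := by omega
      have hkk : k < m + 3 := by omega
      have e1 : (⟨k, hkk⟩ : Fin (m + 3)).castSucc = ⟨k, hk'⟩ := by
        apply Fin.ext; simp
      have e2 : (⟨k, hkk⟩ : Fin (m + 3)).succ = ⟨k + 1, hk⟩ := by
        apply Fin.ext; simp
      have hadj : G.Adj ⟨k, hk'⟩ ⟨k + 1, hk⟩ := e1 ▸ e2 ▸ hPath ⟨k, hkk⟩
      exact (ih hk').trans hadj.reachable
  have hConn : G.Connected := by
    rw [SimpleGraph.connected_iff]
    refine ⟨fun u v => ?_, ⟨0⟩⟩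
    have H : ∀ w : Fin (m + 4), G.Reachable 0 w := by
      intro w; obtain ⟨k, hk⟩ := w; exact hReach k hk
    exact (H u).symm.trans (H v)
  have hA01 : G.Adj 0 1 := by
    rw [hAdj]
    apply hTS
    refine Finset.mem_image.mpr ⟨0, Finset.mem_univ _, ?_⟩
    simp
  have hEmpty : G.neighborSet 0 ∩ G.neighborSet 1 = ∅ := by
    ext w
    simp only [Set.mem_inter_iff, SimpleGraph.mem_neighborSet, Set.mem_empty_iff_false,
      iff_false, not_and]
    intro h0w
    have hmem : s(0, w) ∈ A := hSA ((hAdj 0 w).mp h0w)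
    rcases Finset.mem_insert.mp hmem with heq | hB
    · rw [Sym2.eq_iff] at heq
      rcases heq with ⟨-, rfl⟩ | ⟨h, -⟩
      · exact fun h => h.ne rfl
      · exact absurd h h01
    · exact absurd rfl (hB_ne0 _ hB 0 (by simp))
  refine ⟨G, hConn, ⟨fun u v _ => by omega, fun h => ?_⟩, ?_⟩
  · have := h 0 1 hA01
    rw [hEmpty] at this
    simp at this
  · have hd : (↑S : Set (Sym2 (Fin (m + 4)))) \ {e | e.IsDiag} = ↑S := by
      rw [sdiff_eq_left]
      rw [Set.disjoint_left]
      intro e heS hdiag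
      exact hA_nondiag e (hSA heS) hdiag
    rw [hGdef, SimpleGraph.edgeSet_fromEdgeSet, show Sym2.diagSet = {e : Sym2 (Fin (m + 4)) | e.IsDiag} from rfl, hd, Set.ncard_coe_finset, hScard]
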